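/- Let K be a field, L/K a finite field extension, and C a K-linear abelian category. If the base change category C_L has enough injectives (every object admits a monomorphism into an injective object), then C has enough injectives. -/

import Mathlib

open CategoryTheory CategoryTheory.Limits

universe v u

variable (K : Type*) [Field K] (L : Type*) [Field L] [Algebra K L]
variable (C : Type u) [Category.{v} C] [Abelian C] [Linear K C]

structure BaseChange where
  obj : C
  str : L →ₐ[K] End obj

namespace BaseChange

variable {K L C}

@[ext]
structure Hom (X Y : BaseChange K L C) where
  hom : X.obj ⟶ Y.obj
  comm : ∀ l : L, X.str l ≫ hom = hom ≫ Y.str l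

instance : Category (BaseChange K L C) where
  Hom X Y := Hom X Y
  id X := ⟨𝟙 X.obj, fun l => by simp⟩
  comp {X Y Z} f g := ⟨f.hom ≫ g.hom, fun l => by
    rw [← Category.assoc, f.comm, Category.assoc, g.comm, Category.assoc]⟩

@[ext]
lemma hom_ext {X Y : BaseChange K L C} {f g : X ⟶ Y} (h : f.hom = g.hom) : f = g :=
  Hom.ext h

@[simp] lemma id_hom (X : BaseChange K L C) : Hom.hom (𝟙 X) = 𝟙 X.obj := rfl

@[simp] lemma comp_hom {X Y Z : BaseChange K L C} (f : X ⟶ Y) (g : Y ⟶ Z) :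
    (f ≫ g).hom = f.hom ≫ g.hom := rfl

section Preadditive

variable {X Y : BaseChange K L C}

instance : Zero (X ⟶ Y) := ⟨⟨0, fun l => by simp⟩⟩
instance : Add (X ⟶ Y) :=
  ⟨fun f g => ⟨f.hom + g.hom, fun l => by
    simp [Preadditive.comp_add, Preadditive.add_comp, f.comm, g.comm]⟩⟩
instance : Neg (X ⟶ Y) :=
  ⟨fun f => ⟨-f.hom, fun l => by simp [f.comm]⟩⟩
instance : Sub (X ⟶ Y) :=
  ⟨fun f g => ⟨f.hom - g.hom, fun l => by
    simp [Preadditive.comp_sub, Preadditive.sub_comp, f.comm, g.comm]⟩⟩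
instance : SMul ℕ (X ⟶ Y) :=
  ⟨fun n f => ⟨n • f.hom, fun l => by simp [f.comm]⟩⟩
instance : SMul ℤ (X ⟶ Y) :=
  ⟨fun n f => ⟨n • f.hom, fun l => by simp [f.comm]⟩⟩

@[simp] lemma zero_hom : (0 : X ⟶ Y).hom = 0 := rfl
@[simp] lemma add_hom (f g : X ⟶ Y) : (f + g).hom = f.hom + g.hom := rfl
@[simp] lemma neg_hom (f : X ⟶ Y) : (-f).hom = -f.hom := rfl
@[simp] lemma sub_hom (f g : X ⟶ Y) : (f - g).hom = f.hom - g.hom := rfl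

instance : AddCommGroup (X ⟶ Y) :=
  Function.Injective.addCommGroup (Hom.hom : (X ⟶ Y) → (X.obj ⟶ Y.obj))
    (fun _ _ h => Hom.ext h) rfl (fun _ _ => rfl) (fun _ => rfl) (fun _ _ => rfl)
    (fun _ _ => rfl) (fun _ _ => rfl)

instance : Preadditive (BaseChange K L C) where
  add_comp _ _ _ f f' g := by apply hom_ext; simp [Preadditive.add_comp]
  comp_add _ _ _ f g g' := by apply hom_ext; simp [Preadditive.comp_add]

end Preadditive

end BaseChange

open BaseChange


section Transfer

attribute [local instance] CategoryTheory.Abelian.hasFiniteBiproducts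
set_option linter.unusedSectionVars false

variable {K : Type*} [Field K] {L : Type*} [Field L] [Algebra K L]
variable {C : Type u} [Category.{v} C] [Abelian C] [Linear K C]
variable {ι : Type} [Fintype ι] [DecidableEq ι] (b : Module.Basis ι K L)

lemma matrix_comp_matrix (X : C) (f g : ι → ι → K) :
    (biproduct.matrix fun j k => f j k • 𝟙 X) ≫ (biproduct.matrix fun j k => g j k • 𝟙 X)
      = biproduct.matrix fun j k => (∑ i, f j i * g i k) • 𝟙 X := by
  apply biproduct.hom_ext'; intro j
  apply biproduct.hom_ext; intro k
  simp [biproduct.ι_matrix_assoc, biproduct.matrix_π, biproduct.lift_desc, smul_smul,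
    Finset.sum_smul, mul_comm]

lemma matrix_id (X : C) :
    (biproduct.matrix (fun j k => (if j = k then (1:K) else 0) • 𝟙 X) :
      (⨁ fun _ : ι => X) ⟶ (⨁ fun _ : ι => X)) = 𝟙 _ := by
  apply biproduct.hom_ext'; intro j
  apply biproduct.hom_ext; intro k
  rw [Category.assoc, biproduct.matrix_π, biproduct.ι_desc]
  by_cases h : j = k <;> simp [biproduct.ι_π, h]

lemma repr_mul (x y : L) (k : ι) :
    b.repr (x * y) k = ∑ i, b.repr y i * b.repr (x * b i) k := by
  conv_lhs => rw [← b.sum_repr y, Finset.mul_sum]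
  simp [mul_smul_comm, map_sum, Finset.sum_apply']

noncomputable def Fstr (X : C) : L →ₐ[K] End (⨁ fun _ : ι => X) where
  toFun l := biproduct.matrix fun j k => (b.repr (l * b j)) k • 𝟙 X
  map_one' := by
    show (biproduct.matrix fun j k => (b.repr ((1:L) * b j)) k • 𝟙 X) = _
    rw [End.one_def, ← matrix_id (K := K) X]
    congr 1; funext j k
    rw [one_mul, b.repr_self, Finsupp.single_apply]
  map_mul' x y := by
    show _ = (_ : End _) * (_ : End _)
    rw [End.mul_def, matrix_comp_matrix]
    show (biproduct.matrix fun j k => (b.repr ((x * y) * b j)) k • 𝟙 X) = _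
    congr 1; funext j k
    rw [mul_assoc, repr_mul]
  map_zero' := by
    show (biproduct.matrix fun j k => (b.repr ((0:L) * b j)) k • 𝟙 X) = 0
    apply biproduct.hom_ext'; intro j
    apply biproduct.hom_ext; intro k
    rw [Category.assoc, biproduct.matrix_π, biproduct.ι_desc]
    simp
  map_add' x y := by
    show (biproduct.matrix fun j k => (b.repr ((x+y) * b j)) k • 𝟙 X)
      = (biproduct.matrix fun j k => (b.repr (x * b j)) k • 𝟙 X)
        + (biproduct.matrix fun j k => (b.repr (y * b j)) k • 𝟙 X)
    apply biproduct.hom_ext'; intro j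
    apply biproduct.hom_ext; intro k
    rw [Category.assoc, biproduct.matrix_π, biproduct.ι_desc, Preadditive.comp_add,
      Preadditive.add_comp, Category.assoc, biproduct.matrix_π, biproduct.ι_desc,
      Category.assoc, biproduct.matrix_π, biproduct.ι_desc]
    rw [add_mul, map_add, Finsupp.add_apply, add_smul]
  commutes' r := by
    show (biproduct.matrix fun j k => (b.repr ((algebraMap K L r) * b j)) k • 𝟙 X)
      = r • (𝟙 (⨁ fun _ : ι => X))
    apply biproduct.hom_ext'; intro j
    apply biproduct.hom_ext; intro k
    rw [Category.assoc, biproduct.matrix_π, biproduct.ι_desc, Linear.comp_smul,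
      Category.comp_id, Linear.smul_comp]
    rw [Algebra.algebraMap_eq_smul_one, smul_mul_assoc, one_mul, map_smul, Finsupp.smul_apply,
      b.repr_self, Finsupp.single_apply]
    by_cases h : j = k <;> simp [biproduct.ι_π, h, smul_smul]

lemma Fstr_hom (X : C) (l : L) : (Fstr b X l : (⨁ fun _ : ι => X) ⟶ _) =
    biproduct.matrix fun j k => (b.repr (l * b j)) k • 𝟙 X := rfl

noncomputable abbrev FObj (X : C) : BaseChange K L C := ⟨⨁ fun _ : ι => X, Fstr b X⟩

lemma str_eq_sum (W : BaseChange K L C) (x : L) :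
    (W.str x : W.obj ⟶ W.obj) = ∑ k, (b.repr x) k • (W.str (b k) : W.obj ⟶ W.obj) := by
  conv_lhs => rw [← b.sum_repr x, map_sum]
  congr 1; funext k
  rw [map_smul]

noncomputable def transp {X : C} {W : BaseChange K L C} (phi : X ⟶ W.obj) : FObj b X ⟶ W where
  hom := biproduct.desc fun i => phi ≫ (W.str (b i) : W.obj ⟶ W.obj)
  comm l := by
    show (Fstr b X l : (⨁ fun _ : ι => X) ⟶ _) ≫ _ = _
    rw [Fstr_hom]
    apply biproduct.hom_ext'; intro j
    rw [biproduct.ι_desc_assoc, ← Category.assoc, biproduct.ι_matrix, biproduct.lift_desc]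
    have : (W.str (b j) : W.obj ⟶ W.obj) ≫ (W.str l : W.obj ⟶ W.obj)
        = (W.str (l * b j) : W.obj ⟶ W.obj) := by
      rw [map_mul]; rfl
    rw [Category.assoc, this, str_eq_sum b W (l * b j), Preadditive.comp_sum]
    congr 1; funext k
    rw [Linear.smul_comp, Category.id_comp, Linear.comp_smul]

lemma transp_hom {X : C} {W : BaseChange K L C} (phi : X ⟶ W.obj) :
    (transp b phi).hom = biproduct.desc fun i => phi ≫ (W.str (b i) : W.obj ⟶ W.obj) := rfl

noncomputable def unitHom (X : C) : X ⟶ (FObj b X).obj :=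
  biproduct.lift fun i => (b.repr 1 i) • 𝟙 X

lemma unitHom_transp {X : C} {W : BaseChange K L C} (phi : X ⟶ W.obj) :
    unitHom b X ≫ (transp b phi).hom = phi := by
  rw [unitHom, transp_hom, biproduct.lift_desc]
  have : phi = phi ≫ (W.str 1 : W.obj ⟶ W.obj) := by rw [map_one]; exact (Category.comp_id _).symm
  conv_rhs => rw [this, str_eq_sum b W 1, Preadditive.comp_sum]
  congr 1; funext k
  rw [Linear.smul_comp, Category.id_comp, Linear.comp_smul]

lemma transp_comp {X : C} {W W' : BaseChange K L C} (phi : X ⟶ W.obj) (f : W ⟶ W') :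
    transp b phi ≫ f = transp b (phi ≫ f.hom) := by
  apply BaseChange.hom_ext
  apply biproduct.hom_ext'; intro j
  show _ ≫ (transp b phi).hom ≫ f.hom = _ ≫ (transp b (phi ≫ f.hom)).hom
  rw [transp_hom, transp_hom, biproduct.ι_desc_assoc, biproduct.ι_desc, Category.assoc,
    f.comm (b j), Category.assoc]

include b in
lemma hom_mono {X Y : BaseChange K L C} (f : X ⟶ Y) [Mono f] : Mono f.hom := by
  constructor
  intro Z u v huv
  have h3 : transp b u ≫ f = transp b v ≫ f := by
    rw [transp_comp, transp_comp, huv]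
  have h4 : transp b u = transp b v := (cancel_mono f).mp h3
  calc u = unitHom b Z ≫ (transp b u).hom := (unitHom_transp b u).symm
    _ = unitHom b Z ≫ (transp b v).hom := by rw [h4]
    _ = v := unitHom_transp b v

noncomputable def Fmap {A B : C} (i : A ⟶ B) : FObj b A ⟶ FObj b B where
  hom := biproduct.map fun _ => i
  comm l := by
    show (Fstr b A l : (⨁ fun _ : ι => A) ⟶ _) ≫ _ = _ ≫ (Fstr b B l : (⨁ fun _ : ι => B) ⟶ _)
    rw [Fstr_hom, Fstr_hom]
    apply biproduct.hom_ext'; intro j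
    apply biproduct.hom_ext; intro k
    simp only [Category.assoc, biproduct.map_π, biproduct.matrix_π, biproduct.ι_desc,
      biproduct.ι_desc_assoc, biproduct.ι_map_assoc, biproduct.ι_matrix_assoc,
      biproduct.lift_π, biproduct.lift_π_assoc, Linear.smul_comp, Linear.comp_smul,
      Category.comp_id, Category.id_comp]

lemma mono_Fmap_of_mono {A B : C} (i : A ⟶ B) [Mono i] : Mono (Fmap b i) := by
  have hm : Mono ((Fmap b i).hom) := by
    show Mono (biproduct.map fun _ : ι => i)
    constructor
    intro Z u v huv
    apply biproduct.hom_ext; intro k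
    have h2 := congrArg (fun t => t ≫ biproduct.π (fun _ : ι => B) k) huv
    simp only [Category.assoc, biproduct.map_π] at h2
    rw [← cancel_mono i, Category.assoc, Category.assoc]
    exact h2
  constructor
  intro Z u v huv
  apply BaseChange.hom_ext
  rw [← cancel_mono ((Fmap b i).hom)]
  show (u ≫ Fmap b i).hom = (v ≫ Fmap b i).hom
  rw [huv]

lemma unitHom_natural {A B : C} (i : A ⟶ B) :
    i ≫ unitHom b B = unitHom b A ≫ (Fmap b i).hom := by
  apply biproduct.hom_ext; intro k
  have hF : (Fmap b i).hom = biproduct.map fun _ : ι => i := rfl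
  rw [hF]
  simp only [unitHom, Category.assoc, biproduct.map_π, biproduct.lift_π,
    biproduct.lift_π_assoc, Linear.comp_smul, Linear.smul_comp, Category.comp_id,
    Category.id_comp]

include b in
lemma injective_obj (J : BaseChange K L C) (hJ : Injective J) : Injective J.obj := by
  constructor
  intro A B f i hi
  haveI := hJ
  haveI := mono_Fmap_of_mono b i
  refine ⟨unitHom b B ≫ (Injective.factorThru (transp b f) (Fmap b i)).hom, ?_⟩
  rw [← Category.assoc, unitHom_natural b i, Category.assoc,
    show (Fmap b i).hom ≫ (Injective.factorThru (transp b f) (Fmap b i)).hom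
      = (Fmap b i ≫ Injective.factorThru (transp b f) (Fmap b i)).hom from rfl,
    Injective.comp_factorThru, unitHom_transp]

lemma mono_unitHom (X : C) : Mono (unitHom b X) := by
  obtain ⟨j, hj⟩ : ∃ j, b.repr 1 j ≠ 0 := by
    by_contra hc
    push_neg at hc
    have h0 : b.repr (1 : L) = 0 := Finsupp.ext hc
    exact one_ne_zero (α := L) (by simpa using congrArg b.repr.symm h0)
  haveI : IsSplitMono (unitHom b X) := IsSplitMono.mk'
    { retraction := biproduct.π _ j ≫ ((b.repr 1 j)⁻¹ • 𝟙 X)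
      id := by
        rw [unitHom, ← Category.assoc, biproduct.lift_π, Linear.comp_smul, Category.comp_id,
          smul_smul, inv_mul_cancel₀ hj, one_smul] }
  infer_instance

end Transfer

/-- **Statement 12.** For a finite field extension `L/K` and a `K`-linear abelian category
`C`: if the base change category `C_L` has enough injectives, then so does `C`. -/
theorem enoughInjectives_of_baseChange
    (K : Type*) [Field K] (L : Type*) [Field L] [Algebra K L] [FiniteDimensional K L]
    (C : Type u) [Category.{v} C] [Abelian C] [Linear K C]
    (h : EnoughInjectives (BaseChange K L C)) : EnoughInjectives C := by
  let b : Module.Basis (Fin (Module.finrank K L)) K L := Module.finBasis K L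
  constructor
  intro X
  obtain ⟨p⟩ := h.presentation (FObj b X)
  haveI := p.injective
  haveI : Mono p.f.hom := hom_mono b p.f
  haveI := mono_unitHom b X
  exact ⟨{
    J := p.J.obj
    injective := injective_obj b p.J p.injective
    f := unitHom b X ≫ p.f.hom
    mono := mono_comp _ _ }⟩
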